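/- Let A be a complex unital Banach algebra and τ : A → ℂ a continuous linear functional with the trace property τ(ab) = τ(ba). Let u : ℝ × ℝ → A be a twice continuously differentiable map such that u(s, t) is invertible in A for all (s, t) and u(s, t + 2π) = u(s, t) for all s, t. Then the quantity Ch(s) = ∫₀^{2π} τ( u(s,t)⁻¹ · ∂_t u(s,t) ) dt is independent of s; that is, the odd Chern number Ch_{{0}} is invariant under smooth homotopies of loops of invertible elements. -/

import Mathlib

open scoped Real in
/-- **Homotopy invariance of the odd Chern number `Ch₍₀₎`.**
Let `A` be a complex unital Banach algebra and `τ : A → ℂ` a continuous linear functional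
with the trace property.  If `u : ℝ × ℝ → A` is a twice continuously differentiable map
with `u(s,t)` invertible for all `(s,t)` and `u(s, t + 2π) = u(s, t)`, then the winding
number `Ch(s) = ∫₀^{2π} τ(u(s,t)⁻¹ ∂_t u(s,t)) dt` is independent of `s`. -/
theorem oddChernNumber_homotopy_invariant
    {A : Type*} [NormedRing A] [NormedAlgebra ℂ A] [CompleteSpace A]
    (τ : A →L[ℂ] ℂ) (htr : ∀ a b : A, τ (a * b) = τ (b * a))
    (u : ℝ × ℝ → A) (hu : ContDiff ℝ 2 u)
    (hinv : ∀ s t : ℝ, IsUnit (u (s, t)))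
    (hper : ∀ s t : ℝ, u (s, t + 2 * π) = u (s, t)) :
    ∀ s₁ s₂ : ℝ,
      (∫ t in (0 : ℝ)..(2 * π),
        τ (Ring.inverse (u (s₁, t)) * deriv (fun t' => u (s₁, t')) t)) =
      (∫ t in (0 : ℝ)..(2 * π),
        τ (Ring.inverse (u (s₂, t)) * deriv (fun t' => u (s₂, t')) t)) := by
  intro s₁ s₂
  set D : ℝ × ℝ → (ℝ × ℝ →L[ℝ] A) := fderiv ℝ u with hDdef
  have huD : ContDiff ℝ 1 D := hu.fderiv_right (by norm_num)
  have hD : ∀ p, HasFDerivAt u (D p) p := fun p =>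
    ((hu.differentiable (by norm_num)) p).hasFDerivAt
  have hDD : ∀ p, HasFDerivAt D (fderiv ℝ D p) p := fun p =>
    ((huD.differentiable one_ne_zero) p).hasFDerivAt
  have contD : Continuous D := huD.continuous
  have contDD : Continuous (fderiv ℝ D) := huD.continuous_fderiv one_ne_zero
  set v : ℝ × ℝ → A := fun p => Ring.inverse (u p) with hvdef
  have contv : Continuous v := by
    rw [continuous_iff_continuousAt]
    intro p
    obtain ⟨w, hw⟩ := hinv p.1 p.2
    have h1 : ContinuousAt Ring.inverse (u p) := hw ▸ NormedRing.inverse_continuousAt w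
    exact h1.comp hu.continuous.continuousAt
  -- derivatives along coordinate lines
  have curve_s : ∀ s t : ℝ, HasDerivAt (fun x : ℝ => ((x, t) : ℝ × ℝ)) ((1:ℝ), (0:ℝ)) s :=
    fun s t => (hasDerivAt_id s).prodMk (hasDerivAt_const s t)
  have curve_t : ∀ s t : ℝ, HasDerivAt (fun x : ℝ => ((s, x) : ℝ × ℝ)) ((0:ℝ), (1:ℝ)) t :=
    fun s t => (hasDerivAt_const t s).prodMk (hasDerivAt_id t)
  have hus : ∀ s t : ℝ, HasDerivAt (fun x => u (x, t)) (D (s, t) (1, 0)) s := fun s t =>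
    (hD (s, t)).comp_hasDerivAt s (curve_s s t)
  have hut : ∀ s t : ℝ, HasDerivAt (fun x => u (s, x)) (D (s, t) (0, 1)) t := fun s t =>
    (hD (s, t)).comp_hasDerivAt t (curve_t s t)
  have hvs : ∀ s t : ℝ, HasDerivAt (fun x => v (x, t))
      (-(v (s, t) * D (s, t) (1, 0) * v (s, t))) s := by
    intro s t
    obtain ⟨w, hw⟩ := hinv s t
    have h1 : HasFDerivAt Ring.inverse
        (-ContinuousLinearMap.mulLeftRight ℝ A ↑w⁻¹ ↑w⁻¹) (u (s, t)) := by
      rw [← hw]; exact hasFDerivAt_ringInverse w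
    have h2 := h1.comp_hasDerivAt s (hus s t)
    have hv : v (s, t) = ↑w⁻¹ := by rw [hvdef]; simp [← hw]
    have h3 : HasDerivAt (Ring.inverse ∘ fun x => u (x, t))
        (-(↑w⁻¹ * D (s, t) (1, 0) * ↑w⁻¹)) s := by simpa using h2
    rw [hv]; exact h3
  have hvt : ∀ s t : ℝ, HasDerivAt (fun x => v (s, x))
      (-(v (s, t) * D (s, t) (0, 1) * v (s, t))) t := by
    intro s t
    obtain ⟨w, hw⟩ := hinv s t
    have h1 : HasFDerivAt Ring.inverse
        (-ContinuousLinearMap.mulLeftRight ℝ A ↑w⁻¹ ↑w⁻¹) (u (s, t)) := by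
      rw [← hw]; exact hasFDerivAt_ringInverse w
    have h2 := h1.comp_hasDerivAt t (hut s t)
    have hv : v (s, t) = ↑w⁻¹ := by rw [hvdef]; simp [← hw]
    have h3 : HasDerivAt (Ring.inverse ∘ fun x => u (s, x))
        (-(↑w⁻¹ * D (s, t) (0, 1) * ↑w⁻¹)) t := by simpa using h2
    rw [hv]; exact h3
  have hDs : ∀ s t : ℝ, HasDerivAt (fun x => D (x, t) ((0:ℝ), (1:ℝ)))
      (fderiv ℝ D (s, t) (1, 0) (0, 1)) s := by
    intro s t
    have h3 : HasDerivAt (fun x => D (x, t)) (fderiv ℝ D (s, t) (1, 0)) s :=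
      (hDD (s, t)).comp_hasDerivAt s (curve_s s t)
    simpa using h3.clm_apply (hasDerivAt_const s ((0:ℝ), (1:ℝ)))
  have hDt : ∀ s t : ℝ, HasDerivAt (fun x => D (s, x) ((1:ℝ), (0:ℝ)))
      (fderiv ℝ D (s, t) (0, 1) (1, 0)) t := by
    intro s t
    have h3 : HasDerivAt (fun x => D (s, x)) (fderiv ℝ D (s, t) (0, 1)) t :=
      (hDD (s, t)).comp_hasDerivAt t (curve_t s t)
    simpa using h3.clm_apply (hasDerivAt_const t ((1:ℝ), (0:ℝ)))
  -- the common mixed derivative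
  set Hf : ℝ × ℝ → ℂ := fun p =>
    τ (v p * fderiv ℝ D p (1, 0) (0, 1)) -
      τ ((v p * D p (1, 0)) * (v p * D p (0, 1))) with hHfdef
  have lemA : ∀ s t : ℝ,
      HasDerivAt (fun x => τ (v (x, t) * D (x, t) ((0:ℝ), (1:ℝ)))) (Hf (s, t)) s := by
    intro s t
    have h5 := (hvs s t).mul (hDs s t)
    have h6 := ((τ.restrictScalars ℝ).hasFDerivAt).comp_hasDerivAt s h5
    refine HasDerivAt.congr_deriv h6 ?_
    have key : -(v (s, t) * D (s, t) (1, 0) * v (s, t)) * D (s, t) (0, 1) +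
        v (s, t) * fderiv ℝ D (s, t) (1, 0) (0, 1) =
        v (s, t) * fderiv ℝ D (s, t) (1, 0) (0, 1) +
          -((v (s, t) * D (s, t) (1, 0)) * (v (s, t) * D (s, t) (0, 1))) := by
      noncomm_ring
    simp only [ContinuousLinearMap.coe_restrictScalars', hHfdef]
    rw [key, map_add, map_neg]
    ring
  have lemB : ∀ s t : ℝ,
      HasDerivAt (fun x => τ (v (s, x) * D (s, x) ((1:ℝ), (0:ℝ)))) (Hf (s, t)) t := by
    intro s t
    have h5 := (hvt s t).mul (hDt s t)
    have h6 := ((τ.restrictScalars ℝ).hasFDerivAt).comp_hasDerivAt t h5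
    refine HasDerivAt.congr_deriv h6 ?_
    have hsym : fderiv ℝ D (s, t) ((0:ℝ), (1:ℝ)) ((1:ℝ), (0:ℝ)) =
        fderiv ℝ D (s, t) ((1:ℝ), (0:ℝ)) ((0:ℝ), (1:ℝ)) :=
      second_derivative_symmetric hD (hDD (s, t)) _ _
    have key : -(v (s, t) * D (s, t) (0, 1) * v (s, t)) * D (s, t) (1, 0) +
        v (s, t) * fderiv ℝ D (s, t) (0, 1) (1, 0) =
        v (s, t) * fderiv ℝ D (s, t) (0, 1) (1, 0) +
          -((v (s, t) * D (s, t) (0, 1)) * (v (s, t) * D (s, t) (1, 0))) := by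
      noncomm_ring
    simp only [ContinuousLinearMap.coe_restrictScalars', hHfdef]
    rw [key, map_add, map_neg, hsym,
      htr (v (s, t) * D (s, t) (0, 1)) (v (s, t) * D (s, t) (1, 0))]
    ring
  -- continuity of Hf
  have contApp : ∀ w : ℝ × ℝ, Continuous (fun p => D p w) := fun w =>
    (ContinuousLinearMap.apply ℝ A w).continuous.comp contD
  have contApp2 : ∀ w w' : ℝ × ℝ, Continuous (fun p => fderiv ℝ D p w w') := fun w w' =>
    (ContinuousLinearMap.apply ℝ A w').continuous.comp
      ((ContinuousLinearMap.apply ℝ (ℝ × ℝ →L[ℝ] A) w).continuous.comp contDD)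
  have contHf : Continuous Hf := by
    apply Continuous.sub
    · exact (τ.restrictScalars ℝ).continuous.comp (contv.mul (contApp2 (1, 0) (0, 1)))
    · exact (τ.restrictScalars ℝ).continuous.comp
        ((contv.mul (contApp (1, 0))).mul (contv.mul (contApp (0, 1))))
  -- the t-integral of Hf vanishes by periodicity
  have intHf_zero : ∀ s : ℝ, (∫ t in (0:ℝ)..(2 * π), Hf (s, t)) = 0 := by
    intro s
    have hint : IntervalIntegrable (fun t => Hf (s, t)) MeasureTheory.volume 0 (2 * π) :=
      (contHf.comp (continuous_const.prodMk continuous_id)).intervalIntegrable 0 (2 * π)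
    have hftc := intervalIntegral.integral_eq_sub_of_hasDerivAt
      (fun t _ => lemB s t) hint
    rw [hftc]
    -- periodicity: the integrand at 2π equals that at 0
    have huper : u (s, 2 * π) = u (s, 0) := by
      have := hper s 0; rwa [zero_add] at this
    have hvper : v (s, 2 * π) = v (s, 0) := by rw [hvdef]; simp only [huper]
    have hDper : D (s, 2 * π) (1, 0) = D (s, 0) (1, 0) := by
      have h1 : HasDerivAt (fun x => u (x, 0)) (D (s, 2 * π) (1, 0)) s := by
        have h2 := hus s (2 * π)
        have : (fun x => u (x, 2 * π)) = fun x => u (x, 0) := by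
          funext x; have := hper x 0; rwa [zero_add] at this
        rwa [this] at h2
      exact h1.unique (hus s 0)
    rw [hvper, hDper, sub_self]
  -- derivative of the statement's integrand
  have hderiv_eq : ∀ s t : ℝ, deriv (fun t' => u (s, t')) t = D (s, t) (0, 1) :=
    fun s t => (hut s t).deriv
  -- the Chern number as a function of s
  set Ch : ℝ → ℂ := fun x => ∫ t in (0:ℝ)..(2 * π), τ (v (x, t) * D (x, t) (0, 1)) with hChdef
  have hCh : ∀ s₀ : ℝ, HasDerivAt Ch 0 s₀ := by
    intro s₀
    obtain ⟨C, hC⟩ := ((isCompact_closedBall s₀ 1).prod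
      (isCompact_uIcc (a := (0:ℝ)) (b := 2 * π))).exists_bound_of_continuousOn
      contHf.continuousOn
    have key := (intervalIntegral.hasDerivAt_integral_of_dominated_loc_of_deriv_le
      (F := fun x t => τ (v (x, t) * D (x, t) (0, 1)))
      (F' := fun x t => Hf (x, t)) (x₀ := s₀) (a := 0) (b := 2 * π)
      (bound := fun _ => C) (μ := MeasureTheory.volume) (Metric.ball_mem_nhds s₀ one_pos)
      (Filter.Eventually.of_forall fun x =>
        (((τ.restrictScalars ℝ).continuous.comp
          (contv.mul (contApp (0, 1)))).comp
            (continuous_const.prodMk continuous_id)).aestronglyMeasurable)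
      ((((τ.restrictScalars ℝ).continuous.comp (contv.mul (contApp (0, 1)))).comp
        (continuous_const.prodMk continuous_id)).intervalIntegrable 0 (2 * π))
      ((contHf.comp (continuous_const.prodMk continuous_id)).aestronglyMeasurable)
      (Filter.Eventually.of_forall fun t ht x hx =>
        hC (x, t) ⟨Metric.ball_subset_closedBall hx, Set.uIoc_subset_uIcc ht⟩)
      (intervalIntegrable_const)
      (Filter.Eventually.of_forall fun t _ x _ => lemA x t)).2
    rwa [intHf_zero s₀] at key
  have hconst : Ch s₁ = Ch s₂ :=
    is_const_of_deriv_eq_zero (fun x => (hCh x).differentiableAt)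
      (fun x => (hCh x).deriv) s₁ s₂
  simpa only [hChdef, hderiv_eq] using hconst
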